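/- arXiv:2502.03854 — 6 statements merged into one kernel-verified Lean document; each statement's English description precedes it below -/
import Mathlib

section
/- Fix a finite MDP, α > 0, κ ∈ [0,1), and bounding functions f and g. For any Ψ : S×𝒜 → ℝ and any policy π, the bounded gap-increasing operator satisfies (T^{fg}_π Ψ)(s,a) ≤ (T^α Ψ)(s,a) for all (s,a) ∈ S×𝒜. -/
open Finset Filter

noncomputable section

variable {S A : Type*}

/-- A Markovian transition kernel: nonnegative and summing to one over next states. -/
def isKernel [Fintype S] (P : S → A → S → ℝ) : Prop :=
  (∀ s a s', 0 ≤ P s a s') ∧ ∀ s a, ∑ s', P s a s' = 1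

/-- A (Markovian, stochastic) policy: a probability distribution over actions per state. -/
def isPolicy [Fintype A] (π : S → A → ℝ) : Prop :=
  (∀ s a, 0 ≤ π s a) ∧ ∀ s, ∑ a, π s a = 1

/-- A bounding function with constant `c > 0`: nondecreasing, `h 0 = 0`,
`0 ≤ h x ≤ x` for `x ≥ 0`, `x ≤ h x ≤ 0` for `x ≤ 0`, and `|h x| ≤ c`. -/
def isBounding (h : ℝ → ℝ) (c : ℝ) : Prop :=
  Monotone h ∧ h 0 = 0 ∧ (∀ x, 0 ≤ x → 0 ≤ h x ∧ h x ≤ x) ∧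
    (∀ x, x ≤ 0 → x ≤ h x ∧ h x ≤ 0) ∧ (∀ x, |h x| ≤ c) ∧ 0 < c

/-- The soft (log-sum-exp) state value `(L^α Ψ)(s) = α log ∑_a exp (Ψ(s,a)/α)`. -/
def lse [Fintype A] (α : ℝ) (Ψ : S → A → ℝ) (s : S) : ℝ :=
  α * Real.log (∑ a, Real.exp (Ψ s a / α))

/-- The softmax (Boltzmann) policy `G^α(Ψ)`. -/
def gibbs [Fintype A] (α : ℝ) (Ψ : S → A → ℝ) (s : S) (a : A) : ℝ :=
  Real.exp (Ψ s a / α) / ∑ b, Real.exp (Ψ s b / α)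

/-- The soft advantage `A_Ψ(s,a) = Ψ(s,a) − (L^α Ψ)(s)`. -/
def adv [Fintype A] (α : ℝ) (Ψ : S → A → ℝ) (s : S) (a : A) : ℝ :=
  Ψ s a - lse α Ψ s

/-- `(P V)(s,a) = ∑_{s'} P(s'|s,a) V(s')`. -/
def PV [Fintype S] (P : S → A → S → ℝ) (V : S → ℝ) (s : S) (a : A) : ℝ :=
  ∑ s', P s a s' * V s'

/-- `(P^π W)(s) = ∑_a π(a|s) ∑_{s'} P(s'|s,a) W(s')`. -/
def Ppi [Fintype S] [Fintype A] (P : S → A → S → ℝ) (π : S → A → ℝ)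
    (W : S → ℝ) (s : S) : ℝ :=
  ∑ a, π s a * ∑ s', P s a s' * W s'

/-- Entropy of a policy: `H(π)(s) = −∑_a π(a|s) log π(a|s)`. -/
def ent [Fintype A] (π : S → A → ℝ) (s : S) : ℝ :=
  -∑ a, π s a * Real.log (π s a)

/-- KL divergence between two policies at a state. -/
def klDiv [Fintype A] (π₁ π₂ : S → A → ℝ) (s : S) : ℝ :=
  ∑ a, π₁ s a * Real.log (π₁ s a / π₂ s a)

/-- The soft Bellman optimality operator
`(T^α Ψ)(s,a) = R(s,a) + γ ∑_{s'} P(s'|s,a) (L^α Ψ)(s')`. -/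
def softBellman [Fintype S] [Fintype A] (P : S → A → S → ℝ) (R : S → A → ℝ)
    (γ α : ℝ) (Ψ : S → A → ℝ) (s : S) (a : A) : ℝ :=
  R s a + γ * ∑ s', P s a s' * lse α Ψ s'

/-- A sandwiched operator:
`(T^α Ψ)(s,a) − κ((L^α Ψ)(s) − Ψ(s,a)) ≤ (T' Ψ)(s,a) ≤ (T^α Ψ)(s,a)` for all `Ψ, s, a`. -/
def Sandwiched [Fintype S] [Fintype A] (P : S → A → S → ℝ) (R : S → A → ℝ)
    (γ α κ : ℝ) (T' : (S → A → ℝ) → S → A → ℝ) : Prop :=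
  ∀ Ψ s a, softBellman P R γ α Ψ s a - κ * (lse α Ψ s - Ψ s a) ≤ T' Ψ s a ∧
    T' Ψ s a ≤ softBellman P R γ α Ψ s a

/-- The bounded gap-increasing operator `T^{fg}_π`. -/
def balOp [Fintype S] [Fintype A] (P : S → A → S → ℝ) (R : S → A → ℝ)
    (γ α κ : ℝ) (f g : ℝ → ℝ) (π Ψ : S → A → ℝ) (s : S) (a : A) : ℝ :=
  R s a + κ * f (adv α Ψ s a) +
    γ * ∑ s', P s a s' * ∑ a', π s' a' * (Ψ s' a' - g (adv α Ψ s' a'))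

/-- The BAL sequence `Ψ_{k+1} = T^{fg}_{π_{k+1}} Ψ_k` with `π_{k+1} = G^α(Ψ_k)`. -/
def balSeq [Fintype S] [Fintype A] (P : S → A → S → ℝ) (R : S → A → ℝ)
    (γ α κ : ℝ) (f g : ℝ → ℝ) (Ψ0 : S → A → ℝ) : ℕ → S → A → ℝ
  | 0 => Ψ0
  | k + 1 => balOp P R γ α κ f g (gibbs α (balSeq P R γ α κ f g Ψ0 k))
      (balSeq P R γ α κ f g Ψ0 k)

/-- The BAL policy sequence: `π_0` is uniform and `π_{k+1} = G^α(Ψ_k)`. -/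
def balPol [Fintype S] [Fintype A] (P : S → A → S → ℝ) (R : S → A → ℝ)
    (γ α κ : ℝ) (f g : ℝ → ℝ) (Ψ0 : S → A → ℝ) : ℕ → S → A → ℝ
  | 0 => fun _ _ => 1 / (Fintype.card A : ℝ)
  | k + 1 => gibbs α (balSeq P R γ α κ f g Ψ0 k)

/-- Hard (non-regularized) state value `V(s) = max_a Ψ(s,a)`. -/
def hardV [Fintype A] [Nonempty A] (Ψ : S → A → ℝ) (s : S) : ℝ :=
  Finset.univ.sup' Finset.univ_nonempty (Ψ s)

/-- Hard advantage `A(s,a) = Ψ(s,a) − V(s)`. -/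
def hardAdv [Fintype A] [Nonempty A] (Ψ : S → A → ℝ) (s : S) (a : A) : ℝ :=
  Ψ s a - hardV Ψ s

/-- Hard Bellman optimality operator `(T Ψ)(s,a) = R(s,a) + γ ∑_{s'} P(s'|s,a) max_b Ψ(s',b)`. -/
def hardBellman [Fintype S] [Fintype A] [Nonempty A] (P : S → A → S → ℝ)
    (R : S → A → ℝ) (γ : ℝ) (Ψ : S → A → ℝ) (s : S) (a : A) : ℝ :=
  R s a + γ * ∑ s', P s a s' * hardV Ψ s'

/-- Hard bounded gap-increasing operator. -/
def hardBalOp [Fintype S] [Fintype A] [Nonempty A] (P : S → A → S → ℝ)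
    (R : S → A → ℝ) (γ κ : ℝ) (f g : ℝ → ℝ) (π Ψ : S → A → ℝ) (s : S) (a : A) : ℝ :=
  R s a + κ * f (hardAdv Ψ s a) +
    γ * ∑ s', P s a s' * ∑ a', π s' a' * (Ψ s' a' - g (hardAdv Ψ s' a'))


/-- the bounded gap-increasing operator is dominated by the soft
Bellman optimality operator. -/
theorem balOp_le_softBellman [Fintype S] [Fintype A] [Nonempty S] [Nonempty A]
    (P : S → A → S → ℝ) (R : S → A → ℝ) (Rmax γ α κ cf cg : ℝ) (f g : ℝ → ℝ)
    (hP : isKernel P) (hR : ∀ s a, |R s a| ≤ Rmax) (hRmax : 0 ≤ Rmax)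
    (hγ0 : 0 < γ) (hγ1 : γ < 1) (hα : 0 < α) (hκ0 : 0 ≤ κ) (hκ1 : κ < 1)
    (hf : isBounding f cf) (hg : isBounding g cg)
    (Ψ : S → A → ℝ) (pol : S → A → ℝ) (hpol : isPolicy pol) :
    ∀ s a, balOp P R γ α κ f g pol Ψ s a ≤ softBellman P R γ α Ψ s a := by
  have hle : ∀ (s : S) (a : A), Ψ s a ≤ lse α Ψ s := by
    intro s a
    rw [lse, ← div_le_iff₀' hα,
      Real.le_log_iff_exp_le (Finset.sum_pos (fun b _ => Real.exp_pos _) univ_nonempty)]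
    exact Finset.single_le_sum (f := fun b => Real.exp (Ψ s b / α))
      (fun b _ => (Real.exp_pos _).le) (mem_univ a)
  intro s a
  have hadv : ∀ (s : S) (a : A), adv α Ψ s a ≤ 0 := fun s a => by
    simpa [adv] using sub_nonpos.mpr (hle s a)
  unfold balOp softBellman
  have h1 : κ * f (adv α Ψ s a) ≤ 0 :=
    mul_nonpos_of_nonneg_of_nonpos hκ0 ((hf.2.2.2.1 _ (hadv s a)).2)
  have h2 : ∀ s', (∑ a', pol s' a' * (Ψ s' a' - g (adv α Ψ s' a'))) ≤ lse α Ψ s' := by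
    intro s'
    calc ∑ a', pol s' a' * (Ψ s' a' - g (adv α Ψ s' a'))
        ≤ ∑ a', pol s' a' * lse α Ψ s' := by
          refine Finset.sum_le_sum fun a' _ => ?_
          refine mul_le_mul_of_nonneg_left ?_ (hpol.1 s' a')
          have := (hg.2.2.2.1 _ (hadv s' a')).1
          have : Ψ s' a' - g (adv α Ψ s' a') ≤ Ψ s' a' - adv α Ψ s' a' := by
            linarith
          simpa [adv] using this
      _ = lse α Ψ s' := by rw [← Finset.sum_mul, hpol.2 s', one_mul]
  have h3 : γ * ∑ s', P s a s' * ∑ a', pol s' a' * (Ψ s' a' - g (adv α Ψ s' a'))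
      ≤ γ * ∑ s', P s a s' * lse α Ψ s' := by
    refine mul_le_mul_of_nonneg_left ?_ hγ0.le
    exact Finset.sum_le_sum fun s' _ =>
      mul_le_mul_of_nonneg_left (h2 s') (hP.1 s a s')
  linarith

end
end

section
/- Fix a finite MDP, κ ∈ [0,1), and bounding functions f and g. For Ψ : S×𝒜 → ℝ define the hard value V(s) = max_{a∈𝒜} Ψ(s,a), the hard advantage A(s,a) = Ψ(s,a) − V(s), the hard Bellman optimality operator (T Ψ)(s,a) = R(s,a) + γ ∑_{s'} P(s'|s,a) max_{b} Ψ(s',b), and the hard bounded gap-increasing operator (T^{fg}_π Ψ)(s,a) = R(s,a) + κ f(A(s,a)) + γ ∑_{s'} P(s'|s,a) ∑_{a'} π(a'|s') (Ψ(s',a') − g(A(s',a'))). Let π be any greedy policy for Ψ, i.e., a policy with π(a|s) > 0 only if Ψ(s,a) = V(s). Then for all (s,a): (T Ψ)(s,a) − κ(V(s) − Ψ(s,a)) ≤ (T^{fg}_π Ψ)(s,a) ≤ (T Ψ)(s,a). (Hence by Bellemare et al.'s criterion the operator is optimality-preserving and gap-increasing.) -/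
open Finset Filter

noncomputable section

variable {S A : Type*}

/-- for a greedy policy, the hard bounded gap-increasing operator is
sandwiched between `T Ψ − κ(V − Ψ)` and `T Ψ` (hence, by Bellemare et al.'s
criterion, it is optimality-preserving and gap-increasing). -/
theorem hardBalOp_sandwich [Fintype S] [Fintype A] [Nonempty S] [Nonempty A]
    (P : S → A → S → ℝ) (R : S → A → ℝ) (Rmax γ κ cf cg : ℝ) (f g : ℝ → ℝ)
    (hP : isKernel P) (hR : ∀ s a, |R s a| ≤ Rmax) (hRmax : 0 ≤ Rmax)
    (hγ0 : 0 < γ) (hγ1 : γ < 1) (hκ0 : 0 ≤ κ) (hκ1 : κ < 1)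
    (hf : isBounding f cf) (hg : isBounding g cg)
    (Ψ : S → A → ℝ) (pol : S → A → ℝ) (hpol : isPolicy pol)
    (hgreedy : ∀ s a, 0 < pol s a → Ψ s a = hardV Ψ s) :
    ∀ s a, hardBellman P R γ Ψ s a - κ * (hardV Ψ s - Ψ s a) ≤
        hardBalOp P R γ κ f g pol Ψ s a ∧
      hardBalOp P R γ κ f g pol Ψ s a ≤ hardBellman P R γ Ψ s a := by
  intro s a
  have hinner : ∀ s', ∑ a', pol s' a' * (Ψ s' a' - g (hardAdv Ψ s' a')) = hardV Ψ s' := by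
    intro s'
    have : ∀ a' ∈ Finset.univ,
        pol s' a' * (Ψ s' a' - g (hardAdv Ψ s' a')) = pol s' a' * hardV Ψ s' := by
      intro a' _
      rcases eq_or_lt_of_le (hpol.1 s' a') with h0 | hpos
      · simp [← h0]
      · have hΨ : Ψ s' a' = hardV Ψ s' := hgreedy s' a' hpos
        have : hardAdv Ψ s' a' = 0 := by simp [hardAdv, hΨ]
        rw [this, hg.2.1, hΨ, sub_zero]
    rw [Finset.sum_congr rfl this, ← Finset.sum_mul, hpol.2 s', one_mul]
  have heq : hardBalOp P R γ κ f g pol Ψ s a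
      = hardBellman P R γ Ψ s a + κ * f (hardAdv Ψ s a) := by
    simp only [hardBalOp, hardBellman]
    rw [Finset.sum_congr rfl fun s' _ => by rw [hinner s']]
    ring
  have hadv : hardAdv Ψ s a ≤ 0 := by
    have : Ψ s a ≤ hardV Ψ s :=
      Finset.le_sup' (Ψ s) (Finset.mem_univ a)
    simp [hardAdv]; linarith
  obtain ⟨hfl, hfu⟩ := hf.2.2.2.1 _ hadv
  constructor
  · rw [heq]
    have h1 : κ * (Ψ s a - hardV Ψ s) ≤ κ * f (hardAdv Ψ s a) :=
      mul_le_mul_of_nonneg_left hfl hκ0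
    have : hardAdv Ψ s a = Ψ s a - hardV Ψ s := rfl
    linarith [h1]
  · rw [heq]
    nlinarith [mul_le_mul_of_nonneg_left hfu hκ0]

end
end

section
/- Fix a finite MDP, α > 0, and κ ∈ [0,1). Let T' : ℝ^{S×𝒜} → ℝ^{S×𝒜} be a sandwiched operator, let Ψ_0 : S×𝒜 → ℝ, and consider the induced sequence Ψ_{k+1} = T' Ψ_k with V_k = L^α Ψ_k. Then for all k ∈ ℕ and all s ∈ S: |V_k(s)| ≤ (R_max + 3·‖V_0‖_∞ + α·log|𝒜|)/(1−γ), where ‖V_0‖_∞ = max_s |V_0(s)| and |𝒜| is the cardinality of 𝒜. -/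
open Finset Filter

noncomputable section

variable {S A : Type*}

lemma le_lse_aux [Fintype A] [Nonempty A] {α : ℝ} (hα : 0 < α) (Ψ : S → A → ℝ)
    (s : S) (a : A) : Ψ s a ≤ lse α Ψ s := by
  have hpos : (0:ℝ) < Real.exp (Ψ s a / α) := Real.exp_pos _
  have hsum : Real.exp (Ψ s a / α) ≤ ∑ b, Real.exp (Ψ s b / α) :=
    Finset.single_le_sum (f := fun b => Real.exp (Ψ s b / α))
      (fun b _ => (Real.exp_pos _).le) (Finset.mem_univ a)
  have hlog : Ψ s a / α ≤ Real.log (∑ b, Real.exp (Ψ s b / α)) := by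
    have := Real.log_le_log hpos hsum
    rwa [Real.log_exp] at this
  have := mul_le_mul_of_nonneg_left hlog hα.le
  calc Ψ s a = α * (Ψ s a / α) := by field_simp
    _ ≤ _ := this

lemma lse_le_aux [Fintype A] [Nonempty A] {α : ℝ} (hα : 0 < α) (Ψ : S → A → ℝ)
    (s : S) : lse α Ψ s ≤ Finset.univ.sup' Finset.univ_nonempty (Ψ s)
      + α * Real.log (Fintype.card A : ℝ) := by
  set m := Finset.univ.sup' Finset.univ_nonempty (Ψ s) with hm
  have hsum : ∑ a, Real.exp (Ψ s a / α) ≤ (Fintype.card A : ℝ) * Real.exp (m / α) := by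
    calc ∑ a, Real.exp (Ψ s a / α) ≤ ∑ _a : A, Real.exp (m / α) := by
          refine Finset.sum_le_sum fun a _ => Real.exp_le_exp.2 ?_
          exact div_le_div_of_nonneg_right
            (Finset.le_sup' (Ψ s) (Finset.mem_univ a)) hα.le |>.trans_eq rfl
      _ = (Fintype.card A : ℝ) * Real.exp (m / α) := by
          rw [Finset.sum_const, Finset.card_univ, nsmul_eq_mul]
  have hpos : (0:ℝ) < ∑ a, Real.exp (Ψ s a / α) :=
    Finset.sum_pos (fun a _ => Real.exp_pos _) Finset.univ_nonempty
  have hcard : (0:ℝ) < (Fintype.card A : ℝ) := by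
    exact_mod_cast Fintype.card_pos
  have hlog : Real.log (∑ a, Real.exp (Ψ s a / α))
      ≤ Real.log (Fintype.card A : ℝ) + m / α := by
    have := Real.log_le_log hpos hsum
    rwa [Real.log_mul hcard.ne' (Real.exp_pos _).ne', Real.log_exp] at this
  have := mul_le_mul_of_nonneg_left hlog hα.le
  rw [lse]
  calc α * Real.log (∑ a, Real.exp (Ψ s a / α))
      ≤ α * (Real.log (Fintype.card A : ℝ) + m / α) := this
    _ = m + α * Real.log (Fintype.card A : ℝ) := by field_simp; ring

lemma pv_abs_le_aux [Fintype S] {P : S → A → S → ℝ} (hP : isKernel P)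
    (V : S → ℝ) (B : ℝ) (hV : ∀ s', |V s'| ≤ B) (s : S) (a : A) :
    |∑ s', P s a s' * V s'| ≤ B := by
  calc |∑ s', P s a s' * V s'| ≤ ∑ s', |P s a s' * V s'| :=
        Finset.abs_sum_le_sum_abs _ _
    _ = ∑ s', P s a s' * |V s'| := by
        refine Finset.sum_congr rfl fun s' _ => ?_
        rw [abs_mul, abs_of_nonneg (hP.1 s a s')]
    _ ≤ ∑ s', P s a s' * B :=
        Finset.sum_le_sum fun s' _ => mul_le_mul_of_nonneg_left (hV s') (hP.1 s a s')
    _ = B := by rw [← Finset.sum_mul, hP.2 s a, one_mul]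

/-- uniform bound on the soft values of the sequence induced by a
sandwiched operator:
`|V_k(s)| ≤ (R_max + 3‖V_0‖_∞ + α log|𝒜|)/(1−γ)`. -/
theorem sandwiched_value_bounded [Fintype S] [Fintype A] [Nonempty S] [Nonempty A]
    (P : S → A → S → ℝ) (R : S → A → ℝ) (Rmax γ α κ : ℝ)
    (hP : isKernel P) (hR : ∀ s a, |R s a| ≤ Rmax) (hRmax : 0 ≤ Rmax)
    (hγ0 : 0 < γ) (hγ1 : γ < 1) (hα : 0 < α) (hκ0 : 0 ≤ κ) (hκ1 : κ < 1)
    (T' : (S → A → ℝ) → S → A → ℝ) (hT : Sandwiched P R γ α κ T')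
    (Ψ0 : S → A → ℝ) :
    ∀ (k : ℕ) (s : S),
      |lse α (T'^[k] Ψ0) s| ≤
        (Rmax + 3 * (Finset.univ.sup' Finset.univ_nonempty fun s' => |lse α Ψ0 s'|) +
            α * Real.log (Fintype.card A : ℝ)) / (1 - γ) := by
  set M := (Finset.univ.sup' Finset.univ_nonempty fun s' => |lse α Ψ0 s'|) with hMdef
  set N := α * Real.log (Fintype.card A : ℝ) with hNdef
  have hM0 : 0 ≤ M :=
    le_trans (abs_nonneg _)
      (Finset.le_sup' (fun s' => |lse α Ψ0 s'|) (Finset.mem_univ (Classical.arbitrary S)))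
  have hcard : (1:ℝ) ≤ (Fintype.card A : ℝ) := by
    exact_mod_cast Fintype.card_pos
  have hN0 : 0 ≤ N := mul_nonneg hα.le (Real.log_nonneg hcard)
  set B := (Rmax + 3 * M + N) / (1 - γ) with hBdef
  have h1γ : 0 < 1 - γ := by linarith
  have hBval : B * (1 - γ) = Rmax + 3 * M + N := div_mul_cancel₀ _ h1γ.ne'
  have hMB : M ≤ B := by nlinarith
  have hstep : Rmax + γ * B + N ≤ B := by nlinarith
  have hB0 : 0 ≤ B := le_trans hM0 hMB
  intro k
  induction k with
  | zero =>
      intro s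
      exact le_trans (Finset.le_sup' (fun s' => |lse α Ψ0 s'|) (Finset.mem_univ s)) hMB
  | succ k IH =>
      intro s
      set Ψ := T'^[k] Ψ0 with hΨ
      have hiter : T'^[k+1] Ψ0 = T' Ψ := by
        rw [Function.iterate_succ_apply']
      rw [hiter]
      have hpv : ∀ s' a, |∑ s'', P s' a s'' * lse α Ψ s''| ≤ B :=
        fun s' a => pv_abs_le_aux hP (lse α Ψ) B IH s' a
      rw [abs_le]
      constructor
      · -- lower bound
        obtain ⟨a, _, ha⟩ := Finset.exists_mem_eq_sup' (Finset.univ_nonempty (α := A)) (Ψ s)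
        have hgap_ub : lse α Ψ s - Ψ s a ≤ N := by
          have := lse_le_aux hα Ψ s
          rw [ha] at this
          linarith
        have hgap_lb : 0 ≤ lse α Ψ s - Ψ s a := by
          have := le_lse_aux hα Ψ s a
          linarith
        have hκgap : κ * (lse α Ψ s - Ψ s a) ≤ N := by nlinarith
        have hlow := (hT Ψ s a).1
        have hR' := (abs_le.1 (hR s a)).1
        have hpv' := (abs_le.1 (hpv s a)).1
        have hΨ1 : -Rmax - γ * B - N ≤ T' Ψ s a := by
          rw [softBellman] at hlow
          nlinarith
        have := le_lse_aux hα (T' Ψ) s a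
        linarith
      · -- upper bound
        have hsup : Finset.univ.sup' Finset.univ_nonempty (T' Ψ s) ≤ Rmax + γ * B := by
          refine Finset.sup'_le _ _ fun a _ => ?_
          have hup := (hT Ψ s a).2
          have hR' := (abs_le.1 (hR s a)).2
          have hpv' := (abs_le.1 (hpv s a)).2
          rw [softBellman] at hup
          nlinarith
        have := lse_le_aux hα (T' Ψ) s
        calc lse α (T' Ψ) s ≤ _ := this
          _ ≤ Rmax + γ * B + N := by linarith
          _ ≤ B := hstep

end
end

section
/- Fix a finite MDP, α > 0, and κ ∈ [0,1). Let T' : ℝ^{S×𝒜} → ℝ^{S×𝒜} be a sandwiched operator, let Ψ_0 : S×𝒜 → ℝ with ‖Ψ_0‖_∞ < ∞, and consider the induced sequence Ψ_{k+1} = T' Ψ_k with V_k = L^α Ψ_k. Then for all k ∈ ℕ and all (s,a) ∈ S×𝒜: Ψ_k(s,a) ≤ (R_max + ‖Ψ_0‖_∞ + γ·α·log|𝒜|)/(1−γ), and Ψ_k(s,a) ≥ −(1/((1−κ)(1−γ)))·((1+κ)·R_max + (γ+κ)·(3·‖V_0‖_∞ + α·log|𝒜|)) − ‖Ψ_0‖_∞.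 -/
open Finset Filter

noncomputable section

variable {S A : Type*}

lemma aux_le_lse [Fintype A] {α : ℝ} (hα : 0 < α) (Ψ : S → A → ℝ) (s : S) (a : A) :
    Ψ s a ≤ lse α Ψ s := by
  unfold lse
  have h1 : Real.exp (Ψ s a / α) ≤ ∑ b, Real.exp (Ψ s b / α) :=
    Finset.single_le_sum (f := fun b => Real.exp (Ψ s b / α))
      (fun b _ => (Real.exp_pos _).le) (Finset.mem_univ a)
  have h2 : Ψ s a / α ≤ Real.log (∑ b, Real.exp (Ψ s b / α)) := by
    calc Ψ s a / α = Real.log (Real.exp (Ψ s a / α)) := (Real.log_exp _).symm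
      _ ≤ _ := Real.log_le_log (Real.exp_pos _) h1
  have h3 := mul_le_mul_of_nonneg_left h2 hα.le
  calc Ψ s a = α * (Ψ s a / α) := by field_simp
    _ ≤ _ := h3

lemma aux_lse_le [Fintype A] [Nonempty A] {α c : ℝ} (hα : 0 < α) (Ψ : S → A → ℝ) (s : S)
    (h : ∀ a, Ψ s a ≤ c) :
    lse α Ψ s ≤ c + α * Real.log (Fintype.card A : ℝ) := by
  have hpos : (0:ℝ) < ∑ b, Real.exp (Ψ s b / α) :=
    Finset.sum_pos (fun b _ => Real.exp_pos _) Finset.univ_nonempty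
  have hcard : ((Fintype.card A : ℝ)) ≠ 0 := by
    exact_mod_cast Fintype.card_ne_zero
  have h1 : ∑ b, Real.exp (Ψ s b / α) ≤ (Fintype.card A : ℝ) * Real.exp (c / α) := by
    calc ∑ b, Real.exp (Ψ s b / α) ≤ ∑ _b : A, Real.exp (c / α) := by
          refine Finset.sum_le_sum fun b _ => Real.exp_le_exp.2 ?_
          rw [div_eq_mul_inv, div_eq_mul_inv]
          exact mul_le_mul_of_nonneg_right (h b) (inv_nonneg.2 hα.le)
      _ = (Fintype.card A : ℝ) * Real.exp (c / α) := by
          rw [Finset.sum_const, Finset.card_univ, nsmul_eq_mul]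
  have h2 : Real.log (∑ b, Real.exp (Ψ s b / α)) ≤ Real.log (Fintype.card A : ℝ) + c / α := by
    have h3 : Real.log (∑ b, Real.exp (Ψ s b / α)) ≤
        Real.log ((Fintype.card A : ℝ) * Real.exp (c / α)) := Real.log_le_log hpos h1
    rwa [Real.log_mul hcard (Real.exp_pos _).ne', Real.log_exp] at h3
  have h4 := mul_le_mul_of_nonneg_left h2 hα.le
  unfold lse
  calc α * Real.log (∑ b, Real.exp (Ψ s b / α))
      ≤ α * (Real.log (Fintype.card A : ℝ) + c / α) := h4
    _ = c + α * Real.log (Fintype.card A : ℝ) := by field_simp; ring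

set_option maxHeartbeats 1600000 in
/-- upper and lower bounds on `Ψ_k` for the sequence induced by a
sandwiched operator. -/
theorem sandwiched_psi_bounded [Fintype S] [Fintype A] [Nonempty S] [Nonempty A]
    (P : S → A → S → ℝ) (R : S → A → ℝ) (Rmax γ α κ : ℝ)
    (hP : isKernel P) (hR : ∀ s a, |R s a| ≤ Rmax) (hRmax : 0 ≤ Rmax)
    (hγ0 : 0 < γ) (hγ1 : γ < 1) (hα : 0 < α) (hκ0 : 0 ≤ κ) (hκ1 : κ < 1)
    (T' : (S → A → ℝ) → S → A → ℝ) (hT : Sandwiched P R γ α κ T')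
    (Ψ0 : S → A → ℝ) :
    ∀ (k : ℕ) (s : S) (a : A),
      T'^[k] Ψ0 s a ≤
          (Rmax + (Finset.univ.sup' Finset.univ_nonempty fun p : S × A => |Ψ0 p.1 p.2|) +
              γ * α * Real.log (Fintype.card A : ℝ)) / (1 - γ) ∧
        -(1 / ((1 - κ) * (1 - γ)) *
              ((1 + κ) * Rmax +
                (γ + κ) *
                  (3 * (Finset.univ.sup' Finset.univ_nonempty fun s' => |lse α Ψ0 s'|) +
                    α * Real.log (Fintype.card A : ℝ)))) -
            (Finset.univ.sup' Finset.univ_nonempty fun p : S × A => |Ψ0 p.1 p.2|) ≤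
          T'^[k] Ψ0 s a := by
  classical
  obtain ⟨hPnn, hPsum⟩ := hP
  have h1γ : (0:ℝ) < 1 - γ := by linarith
  have h1κ : (0:ℝ) < 1 - κ := by linarith
  obtain ⟨L, hLdef⟩ : ∃ x : ℝ, x = α * Real.log (Fintype.card A : ℝ) := ⟨_, rfl⟩
  obtain ⟨M, hMdef⟩ : ∃ x : ℝ,
      x = (Finset.univ.sup' Finset.univ_nonempty fun p : S × A => |Ψ0 p.1 p.2|) := ⟨_, rfl⟩
  obtain ⟨V0s, hV0def⟩ : ∃ x : ℝ,
      x = (Finset.univ.sup' Finset.univ_nonempty fun s' => |lse α Ψ0 s'|) := ⟨_, rfl⟩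
  rw [← hLdef, ← hMdef, ← hV0def]
  obtain ⟨U, hUdef⟩ : ∃ x : ℝ,
      x = (Rmax + M + γ * α * Real.log (Fintype.card A : ℝ)) / (1 - γ) := ⟨_, rfl⟩
  obtain ⟨C, hCdef⟩ : ∃ x : ℝ,
      x = 1 / ((1 - κ) * (1 - γ)) * ((1 + κ) * Rmax + (γ + κ) * (3 * V0s + L)) := ⟨_, rfl⟩
  rw [← hUdef, ← hCdef]
  obtain ⟨Ub, hUbdef⟩ : ∃ x : ℝ, x = (Rmax + L) / (1 - γ) + V0s := ⟨_, rfl⟩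
  obtain ⟨B, hBdef⟩ : ∃ x : ℝ, x = (Rmax + κ * L) / (1 - γ) + V0s := ⟨_, rfl⟩
  have hU : (1 - γ) * U = Rmax + M + γ * L := by
    rw [hUdef, hLdef]; field_simp
  have hUb : (1 - γ) * Ub = Rmax + L + (1 - γ) * V0s := by
    rw [hUbdef]; field_simp
  have hB : (1 - γ) * B = Rmax + κ * L + (1 - γ) * V0s := by
    rw [hBdef]; field_simp
  have hC : (1 - κ) * ((1 - γ) * C) = (1 + κ) * Rmax + (γ + κ) * (3 * V0s + L) := by
    rw [hCdef]; field_simp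
  have hMb : ∀ (s : S) (a : A), |Ψ0 s a| ≤ M := fun s a => by
    rw [hMdef]
    exact Finset.le_sup' (fun p : S × A => |Ψ0 p.1 p.2|) (Finset.mem_univ (s, a))
  have hV0b : ∀ s', |lse α Ψ0 s'| ≤ V0s := fun s' => by
    rw [hV0def]
    exact Finset.le_sup' (fun s' => |lse α Ψ0 s'|) (Finset.mem_univ s')
  have hM0 : 0 ≤ M :=
    le_trans (abs_nonneg _) (hMb (Classical.arbitrary S) (Classical.arbitrary A))
  have hV0s0 : 0 ≤ V0s := le_trans (abs_nonneg _) (hV0b (Classical.arbitrary S))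
  have hL0 : 0 ≤ L := by
    rw [hLdef]
    exact mul_nonneg hα.le (Real.log_nonneg (Nat.one_le_cast.mpr Fintype.card_pos))
  have Psum_le : ∀ (s : S) (a : A) (V : S → ℝ) (c : ℝ),
      (∀ s', V s' ≤ c) → ∑ s', P s a s' * V s' ≤ c := by
    intro s a V c h
    calc ∑ s', P s a s' * V s' ≤ ∑ s', P s a s' * c :=
          Finset.sum_le_sum fun s' _ => mul_le_mul_of_nonneg_left (h s') (hPnn s a s')
      _ = (∑ s', P s a s') * c := by rw [Finset.sum_mul]
      _ = c := by rw [hPsum s a, one_mul]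
  have Psum_ge : ∀ (s : S) (a : A) (V : S → ℝ) (c : ℝ),
      (∀ s', c ≤ V s') → c ≤ ∑ s', P s a s' * V s' := by
    intro s a V c h
    calc c = (∑ s', P s a s') * c := by rw [hPsum s a, one_mul]
      _ = ∑ s', P s a s' * c := by rw [Finset.sum_mul]
      _ ≤ ∑ s', P s a s' * V s' :=
          Finset.sum_le_sum fun s' _ => mul_le_mul_of_nonneg_left (h s') (hPnn s a s')
  have hMU : M ≤ U :=
    le_of_mul_le_mul_left
      (by linarith [hU, mul_nonneg hγ0.le hL0, mul_nonneg hγ0.le hM0, hRmax] :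
        (1 - γ) * M ≤ (1 - γ) * U) h1γ
  have hV0Ub : V0s ≤ Ub :=
    le_of_mul_le_mul_left
      (by linarith [hUb, hRmax, hL0] : (1 - γ) * V0s ≤ (1 - γ) * Ub) h1γ
  have hBV0 : V0s ≤ B :=
    le_of_mul_le_mul_left
      (by linarith [hB, hRmax, mul_nonneg hκ0 hL0] : (1 - γ) * V0s ≤ (1 - γ) * B) h1γ
  have hC0 : 0 ≤ C := by
    have t1 : 0 ≤ (1 + κ) * Rmax := mul_nonneg (by linarith) hRmax
    have t2 : 0 ≤ (γ + κ) * (3 * V0s + L) := mul_nonneg (by linarith) (by linarith)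
    have h2 : ((1 - κ) * (1 - γ)) * 0 ≤ ((1 - κ) * (1 - γ)) * C := by linarith [hC, t1, t2]
    exact le_of_mul_le_mul_left h2 (mul_pos h1κ h1γ)
  have expand : (1 - γ) * ((1 - κ) * C + (1 - κ) * M - (Rmax + γ * B + κ * Ub)) =
      γ * (1 - κ) * L + (γ + κ) * (2 + γ) * V0s + (1 - κ) * (1 - γ) * M := by
    linear_combination hC - γ * hB - κ * hUb
  have keymul : (1 - γ) * (Rmax + γ * B + κ * Ub) ≤
      (1 - γ) * ((1 - κ) * C + (1 - κ) * M) := by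
    have t1 : 0 ≤ γ * (1 - κ) * L := mul_nonneg (mul_nonneg hγ0.le h1κ.le) hL0
    have t2 : 0 ≤ (γ + κ) * (2 + γ) * V0s :=
      mul_nonneg (mul_nonneg (by linarith) (by linarith)) hV0s0
    have t3 : 0 ≤ (1 - κ) * (1 - γ) * M := mul_nonneg (mul_nonneg h1κ.le h1γ.le) hM0
    linarith [expand, t1, t2, t3]
  have key : Rmax + γ * B + κ * Ub ≤ (1 - κ) * C + (1 - κ) * M :=
    le_of_mul_le_mul_left keymul h1γ
  have main : ∀ k : ℕ, (∀ s a, T'^[k] Ψ0 s a ≤ U) ∧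
      (∀ s', lse α (T'^[k] Ψ0) s' ≤ Ub) ∧ (∀ s', -B ≤ lse α (T'^[k] Ψ0) s') ∧
      (∀ s a, -C - M ≤ T'^[k] Ψ0 s a) := by
    intro k
    induction k with
    | zero =>
      simp only [Function.iterate_zero, id_eq]
      refine ⟨fun s a => ?_, fun s' => ?_, fun s' => ?_, fun s a => ?_⟩
      · have := (abs_le.1 (hMb s a)).2; linarith
      · have := (abs_le.1 (hV0b s')).2; linarith
      · have := (abs_le.1 (hV0b s')).1; linarith
      · have := (abs_le.1 (hMb s a)).1; linarith
    | succ k ih =>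
      obtain ⟨ihU, ihUb, ihB, ihC⟩ := ih
      simp only [Function.iterate_succ_apply'] at *
      set Ψ := T'^[k] Ψ0 with hΨdef
      have hlseU : ∀ s', lse α Ψ s' ≤ U + L := by
        intro s'
        have := aux_lse_le hα Ψ s' (fun a => ihU s' a)
        rw [← hLdef] at this
        linarith
      refine ⟨fun s a => ?_, fun s' => ?_, fun s' => ?_, fun s a => ?_⟩
      · have h1 := (hT Ψ s a).2
        have h2 : ∑ s', P s a s' * lse α Ψ s' ≤ U + L := Psum_le s a _ _ hlseU
        have h3 : γ * (∑ s', P s a s' * lse α Ψ s') ≤ γ * (U + L) :=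
          mul_le_mul_of_nonneg_left h2 hγ0.le
        have h4 := (abs_le.1 (hR s a)).2
        simp only [softBellman] at h1
        linarith [hU, hM0]
      · have hub : ∀ a, T' Ψ s' a ≤ Rmax + γ * Ub := by
          intro a
          have h1 := (hT Ψ s' a).2
          have h2 : ∑ s'', P s' a s'' * lse α Ψ s'' ≤ Ub := Psum_le s' a _ _ ihUb
          have h3 := mul_le_mul_of_nonneg_left h2 hγ0.le
          have h4 := (abs_le.1 (hR s' a)).2
          simp only [softBellman] at h1
          linarith
        have hls := aux_lse_le hα (T' Ψ) s' hub
        rw [← hLdef] at hls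
        linarith [hUb, mul_nonneg h1γ.le hV0s0]
      · obtain ⟨a, -, ha⟩ :=
          Finset.exists_max_image Finset.univ (Ψ s') Finset.univ_nonempty
        have hmax : lse α Ψ s' ≤ Ψ s' a + L := by
          have := aux_lse_le hα Ψ s' (fun b => ha b (Finset.mem_univ b))
          rw [← hLdef] at this; linarith
        have h1 := (hT Ψ s' a).1
        have h2 : -B ≤ ∑ s'', P s' a s'' * lse α Ψ s'' := Psum_ge s' a _ _ ihB
        have h3 : γ * (-B) ≤ γ * (∑ s'', P s' a s'' * lse α Ψ s'') :=
          mul_le_mul_of_nonneg_left h2 hγ0.le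
        have h4 := (abs_le.1 (hR s' a)).1
        have h5 : κ * (lse α Ψ s' - Ψ s' a) ≤ κ * L :=
          mul_le_mul_of_nonneg_left (by linarith) hκ0
        have h6 := aux_le_lse hα (T' Ψ) s' a
        simp only [softBellman] at h1
        linarith [hB, mul_nonneg h1γ.le hV0s0]
      · have h1 := (hT Ψ s a).1
        have h2 : -B ≤ ∑ s', P s a s' * lse α Ψ s' := Psum_ge s a _ _ ihB
        have h3 : γ * (-B) ≤ γ * (∑ s', P s a s' * lse α Ψ s') :=
          mul_le_mul_of_nonneg_left h2 hγ0.le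
        have h4 := (abs_le.1 (hR s a)).1
        have h5 : κ * (lse α Ψ s - Ψ s a) ≤ κ * (Ub + C + M) :=
          mul_le_mul_of_nonneg_left (by linarith [ihUb s, ihC s a]) hκ0
        simp only [softBellman] at h1
        linarith [key]
  intro k s a
  obtain ⟨hu, -, -, hl⟩ := main k
  exact ⟨hu s a, hl s a⟩

end
end

section
/- (Entropy-bonus reduction bound.) Let 𝒜 be a finite nonempty set, α > 0, and let g be a bounding function. Set Δ̄_g = sup_{y<0} (1 − g(y)/y). Then 0 ≤ Δ̄_g ≤ 1, and for every probability vector π on 𝒜 with π(a) > 0 for all a: ∑_{a∈𝒜} π(a)·(−α·log π(a) + g(α·log π(a))) ≤ α·Δ̄_g·log|𝒜|, where |𝒜| is the cardinality of 𝒜. -/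
open Finset Filter

noncomputable section

variable {S A : Type*}

/-- entropy-bonus reduction bound: `0 ≤ Δ̄_g ≤ 1` and
`∑_a π(a)(−α log π(a) + g(α log π(a))) ≤ α Δ̄_g log|𝒜|`,
where `Δ̄_g = sup_{y<0}(1 − g(y)/y)`. -/
theorem entropy_bonus_reduction [Fintype A] [Nonempty A]
    (α : ℝ) (hα : 0 < α) (g : ℝ → ℝ) (cg : ℝ) (hg : isBounding g cg)
    (pol : A → ℝ) (hpos : ∀ a, 0 < pol a) (hsum : ∑ a, pol a = 1) :
    (0 ≤ sSup ((fun y => 1 - g y / y) '' Set.Iio 0) ∧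
        sSup ((fun y => 1 - g y / y) '' Set.Iio 0) ≤ 1) ∧
      ∑ a, pol a * (-(α * Real.log (pol a)) + g (α * Real.log (pol a))) ≤
        α * sSup ((fun y => 1 - g y / y) '' Set.Iio 0) *
          Real.log (Fintype.card A : ℝ) := by
  classical
  set S : Set ℝ := (fun y => 1 - g y / y) '' Set.Iio 0 with hS
  obtain ⟨hmono, hg0, hgpos, hgneg, hgbd, hc⟩ := hg
  -- membership bounds
  have hmem : ∀ z ∈ S, 0 ≤ z ∧ z ≤ 1 := by
    rintro z ⟨y, hy, rfl⟩
    have hy' : y < 0 := hy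
    obtain ⟨h1, h2⟩ := hgneg y hy'.le
    have hdiv0 : 0 ≤ g y / y := div_nonneg_of_nonpos h2 hy'.le
    have hdiv1 : g y / y ≤ 1 := by
      rw [div_le_iff_of_neg hy']; linarith
    constructor <;> simp only [] <;> linarith
  have hne : S.Nonempty := ⟨1 - g (-1) / (-1), ⟨-1, by norm_num, rfl⟩⟩
  have hbdd : BddAbove S := ⟨1, fun z hz => (hmem z hz).2⟩
  have hΔ0 : 0 ≤ sSup S := le_trans (hmem _ hne.choose_spec).1 (le_csSup hbdd hne.choose_spec)
  have hΔ1 : sSup S ≤ 1 := csSup_le hne fun z hz => (hmem z hz).2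
  refine ⟨⟨hΔ0, hΔ1⟩, ?_⟩
  set Δ := sSup S
  -- pointwise bound
  have hp1 : ∀ a, pol a ≤ 1 := by
    intro a
    calc pol a ≤ ∑ b, pol b := Finset.single_le_sum (fun b _ => (hpos b).le) (Finset.mem_univ a)
    _ = 1 := hsum
  have key : ∀ a, pol a * (-(α * Real.log (pol a)) + g (α * Real.log (pol a))) ≤
      pol a * (α * (-Real.log (pol a))) * Δ := by
    intro a
    set y := α * Real.log (pol a) with hy
    have hlog : Real.log (pol a) ≤ 0 := Real.log_nonpos (hpos a).le (hp1 a)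
    have hyle : y ≤ 0 := mul_nonpos_of_nonneg_of_nonpos hα.le hlog
    rcases eq_or_lt_of_le hyle with heq | hlt
    · have hl0 : Real.log (pol a) = 0 := by
        have h' := heq; rw [hy] at h'
        exact (mul_eq_zero.mp h').resolve_left hα.ne'
      rw [heq, hg0, hl0]
      simp
    · have hmem' : 1 - g y / y ∈ S := ⟨y, hlt, rfl⟩
      have hle : 1 - g y / y ≤ Δ := le_csSup hbdd hmem'
      have hrw : -y + g y = (-y) * (1 - g y / y) := by
        rw [neg_mul, mul_one_sub, mul_div_cancel₀ _ hlt.ne]; ring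
      have : -y + g y ≤ (-y) * Δ := by
        rw [hrw]
        exact mul_le_mul_of_nonneg_left hle (by linarith)
      have h2 : pol a * (-y + g y) ≤ pol a * ((-y) * Δ) :=
        mul_le_mul_of_nonneg_left this (hpos a).le
      calc pol a * (-y + g y) ≤ pol a * ((-y) * Δ) := h2
      _ = pol a * (α * (-Real.log (pol a))) * Δ := by rw [hy]; ring
  -- entropy bound
  have hent : ∑ a, pol a * (-Real.log (pol a)) ≤ Real.log (Fintype.card A : ℝ) := by
    have hjensen := ConcaveOn.le_map_sum (t := Finset.univ) (w := pol)
      (p := fun a => (pol a)⁻¹) strictConcaveOn_log_Ioi.concaveOn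
      (fun a _ => (hpos a).le) hsum
      (fun a _ => Set.mem_Ioi.mpr (inv_pos.mpr (hpos a)))
    have hsum' : ∑ a, pol a • (pol a)⁻¹ = (Fintype.card A : ℝ) := by
      simp only [smul_eq_mul]
      rw [Finset.sum_congr rfl fun a _ => mul_inv_cancel₀ (hpos a).ne']
      simp [Finset.card_univ]
    rw [hsum'] at hjensen
    refine le_trans (le_of_eq ?_) hjensen
    apply Finset.sum_congr rfl
    intro a _
    rw [smul_eq_mul, Real.log_inv]
  calc ∑ a, pol a * (-(α * Real.log (pol a)) + g (α * Real.log (pol a)))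
      ≤ ∑ a, pol a * (α * (-Real.log (pol a))) * Δ :=
        Finset.sum_le_sum fun a _ => key a
    _ = (α * Δ) * ∑ a, pol a * (-Real.log (pol a)) := by
        rw [Finset.mul_sum]; apply Finset.sum_congr rfl; intro a _; ring
    _ ≤ (α * Δ) * Real.log (Fintype.card A : ℝ) :=
        mul_le_mul_of_nonneg_left hent (mul_nonneg hα.le hΔ0)
    _ = α * Δ * Real.log (Fintype.card A : ℝ) := by ring

end
end

section
/- (Entropy-term error reduction.) Fix a finite MDP, α > 0, κ ∈ [0,1), set τ = (1−κ)α, and fix a bounding function g. Let V*_τ : S → ℝ satisfy V*_τ(s) = (L^τ(R + γ P V*_τ))(s) for all s; set Q*_τ = R + γ P V*_τ, A*_τ(s,a) = Q*_τ(s,a) − V*_τ(s), and π* = G^τ(Q*_τ). Let Ψ : S×𝒜 → ℝ, let π = G^α(Ψ) and A(s,a) = Ψ(s,a) − (L^α Ψ)(s). Define Δ^{Hg}(s) = ∑_a π*(a|s)·[κ·A*_τ(s,a) − γ·∑_{s'} P(s'|s,a)·∑_{a'} π(a'|s')·(A(s',a') − g(A(s',a')))] and Δ^{HId}(s) = κ·∑_a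 π*(a|s)·A*_τ(s,a) = −κ·τ·H(π*)(s). Then: (i) Δ^{HId}(s) ≤ Δ^{Hg}(s) for all s; and (ii) if γ·α·(P^{π*} H(π))(s) ≤ κ·τ·H(π*)(s) for all s, then Δ^{Hg}(s) ≤ 0 for all s, and consequently |Δ^{Hg}(s)| ≤ |Δ^{HId}(s)| for all s. -/
open Finset Filter

noncomputable section

variable {S A : Type*}

private lemma sum_exp_pos' [Fintype A] [Nonempty A] (f : A → ℝ) :
    0 < ∑ a, Real.exp (f a) :=
  Finset.sum_pos (fun a _ => Real.exp_pos _) Finset.univ_nonempty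

private lemma gibbs_nonneg' [Fintype A] [Nonempty A] (β : ℝ) (Q : S → A → ℝ) (s : S) (a : A) :
    0 ≤ gibbs β Q s a :=
  div_nonneg (Real.exp_pos _).le (sum_exp_pos' _).le

private lemma log_gibbs' [Fintype A] [Nonempty A] {β : ℝ} (hβ : β ≠ 0) (Q : S → A → ℝ)
    (s : S) (a : A) :
    β * Real.log (gibbs β Q s a) = Q s a - lse β Q s := by
  unfold gibbs lse
  rw [Real.log_div (Real.exp_ne_zero _) (ne_of_gt (sum_exp_pos' _)), Real.log_exp]
  field_simp

private lemma sum_gibbs_adv' [Fintype A] [Nonempty A] {β : ℝ} (hβ : β ≠ 0) (Q : S → A → ℝ)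
    (s : S) :
    ∑ a, gibbs β Q s a * (Q s a - lse β Q s) = -(β * ent (gibbs β Q) s) := by
  unfold ent
  rw [mul_neg, neg_neg, Finset.mul_sum]
  refine Finset.sum_congr rfl fun a _ => ?_
  rw [← log_gibbs' hβ Q s a]; ring

private lemma adv_nonpos' [Fintype A] [Nonempty A] {β : ℝ} (hβ : 0 < β) (Q : S → A → ℝ)
    (s : S) (a : A) :
    Q s a - lse β Q s ≤ 0 := by
  rw [← log_gibbs' hβ.ne' Q s a]
  have h1 : gibbs β Q s a ≤ 1 := by
    unfold gibbs
    rw [div_le_one (sum_exp_pos' _)]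
    exact Finset.single_le_sum (f := fun b => Real.exp (Q s b / β))
      (fun b _ => (Real.exp_pos _).le) (Finset.mem_univ a)
  have h2 := Real.log_nonpos (gibbs_nonneg' β Q s a) h1
  nlinarith

/-- entropy-term error reduction:
`Δ^{HId} = −κτH(π*)`, `Δ^{HId}(s) ≤ Δ^{Hg}(s)`, and if
`γα(P^{π*}H(π))(s) ≤ κτH(π*)(s)` for all `s`, then `Δ^{Hg}(s) ≤ 0` and
`|Δ^{Hg}(s)| ≤ |Δ^{HId}(s)|` for all `s`. -/
theorem entropy_term_error_reduction [Fintype S] [Fintype A] [Nonempty S] [Nonempty A]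
    (P : S → A → S → ℝ) (R : S → A → ℝ) (Rmax γ α κ cg : ℝ) (g : ℝ → ℝ)
    (hP : isKernel P) (hR : ∀ s a, |R s a| ≤ Rmax) (hRmax : 0 ≤ Rmax)
    (hγ0 : 0 < γ) (hγ1 : γ < 1) (hα : 0 < α) (hκ0 : 0 ≤ κ) (hκ1 : κ < 1)
    (hg : isBounding g cg)
    (Vτ : S → ℝ)
    (hVτ : ∀ s, Vτ s = lse ((1 - κ) * α) (fun s1 a1 => R s1 a1 + γ * PV P Vτ s1 a1) s)
    (Ψ : S → A → ℝ) :
    let τ := (1 - κ) * α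
    let Qτ := fun s a => R s a + γ * PV P Vτ s a
    let polstar := gibbs τ Qτ
    let Aτ := fun s a => Qτ s a - Vτ s
    let polψ := gibbs α Ψ
    let Aψ := adv α Ψ
    let ΔHg := fun s : S =>
      ∑ a, polstar s a *
        (κ * Aτ s a -
          γ * ∑ s', P s a s' * ∑ a', polψ s' a' * (Aψ s' a' - g (Aψ s' a')))
    let ΔHId := fun s : S => κ * ∑ a, polstar s a * Aτ s a
    (∀ s, ΔHId s = -(κ * τ * ent polstar s)) ∧
      (∀ s, ΔHId s ≤ ΔHg s) ∧
      ((∀ s, γ * α * Ppi P polstar (ent polψ) s ≤ κ * τ * ent polstar s) →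
        (∀ s, ΔHg s ≤ 0) ∧ ∀ s, |ΔHg s| ≤ |ΔHId s|) := by
  intro τ Qτ polstar Aτ polψ Aψ ΔHg ΔHId
  have hτ : (0:ℝ) < τ := mul_pos (by linarith) hα
  have hAτ : ∀ s a, Aτ s a = Qτ s a - lse τ Qτ s := by
    intro s a
    show Qτ s a - Vτ s = Qτ s a - lse τ Qτ s
    rw [hVτ s]
  have hId : ∀ s, ΔHId s = -(κ * τ * ent polstar s) := by
    intro s
    show κ * ∑ a, polstar s a * Aτ s a = _
    have h1 : ∑ a, polstar s a * Aτ s a = -(τ * ent polstar s) := by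
      rw [show (∑ a, polstar s a * Aτ s a)
            = ∑ a, gibbs τ Qτ s a * (Qτ s a - lse τ Qτ s) from
          Finset.sum_congr rfl fun a _ => by rw [hAτ s a]]
      exact sum_gibbs_adv' hτ.ne' Qτ s
    rw [h1]; ring
  -- basic nonnegativity / sign facts
  have hPn := hP.1
  have hAψ_le : ∀ s a, Aψ s a ≤ 0 := fun s a => adv_nonpos' hα Ψ s a
  have hgfacts := hg.2.2.2.1
  -- inner sum sign facts
  have hinner_le : ∀ s' , (∑ a', polψ s' a' * (Aψ s' a' - g (Aψ s' a'))) ≤ 0 := by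
    intro s'
    apply Finset.sum_nonpos
    intro a' _
    have h1 := (hgfacts (Aψ s' a') (hAψ_le s' a')).1
    have h2 : (0:ℝ) ≤ polψ s' a' := gibbs_nonneg' α Ψ s' a'
    nlinarith
  have hinner_ge : ∀ s',
      -(α * ent polψ s') ≤ ∑ a', polψ s' a' * (Aψ s' a' - g (Aψ s' a')) := by
    intro s'
    have key : (∑ a', polψ s' a' * Aψ s' a') = -(α * ent polψ s') := by
      exact sum_gibbs_adv' hα.ne' Ψ s'
    rw [← key]
    apply Finset.sum_le_sum
    intro a' _
    have h1 := (hgfacts (Aψ s' a') (hAψ_le s' a')).2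
    have h2 : (0:ℝ) ≤ polψ s' a' := gibbs_nonneg' α Ψ s' a'
    nlinarith
  have hpolstar_nn : ∀ s a, (0:ℝ) ≤ polstar s a := fun s a => gibbs_nonneg' τ Qτ s a
  -- expand ΔHg
  have hsplit : ∀ s, ΔHg s = ΔHId s
      - γ * ∑ a, polstar s a *
          ∑ s', P s a s' * ∑ a', polψ s' a' * (Aψ s' a' - g (Aψ s' a')) := by
    intro s
    show (∑ a, polstar s a * (κ * Aτ s a - γ * ∑ s', P s a s' *
          ∑ a', polψ s' a' * (Aψ s' a' - g (Aψ s' a'))))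
        = κ * ∑ a, polstar s a * Aτ s a - _
    rw [Finset.mul_sum, Finset.mul_sum, ← Finset.sum_sub_distrib]
    refine Finset.sum_congr rfl fun a _ => ?_
    ring
  have hX_le : ∀ s, (∑ a, polstar s a *
      ∑ s', P s a s' * ∑ a', polψ s' a' * (Aψ s' a' - g (Aψ s' a'))) ≤ 0 := by
    intro s
    apply Finset.sum_nonpos
    intro a _
    apply mul_nonpos_of_nonneg_of_nonpos (hpolstar_nn s a)
    apply Finset.sum_nonpos
    intro s' _
    exact mul_nonpos_of_nonneg_of_nonpos (hPn s a s') (hinner_le s')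
  have hmono : ∀ s, ΔHId s ≤ ΔHg s := by
    intro s
    rw [hsplit s]
    nlinarith [hX_le s]
  refine ⟨hId, hmono, fun hcond => ?_⟩
  have hle0 : ∀ s, ΔHg s ≤ 0 := by
    intro s
    rw [hsplit s, hId s]
    have hbound : -(∑ a, polstar s a *
        ∑ s', P s a s' * ∑ a', polψ s' a' * (Aψ s' a' - g (Aψ s' a')))
        ≤ α * Ppi P polstar (ent polψ) s := by
      have hPpi : α * Ppi P polstar (ent polψ) s
          = ∑ a, polstar s a * ∑ s', P s a s' * (α * ent polψ s') := by
        unfold Ppi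
        rw [Finset.mul_sum]
        refine Finset.sum_congr rfl fun a _ => ?_
        rw [Finset.mul_sum, Finset.mul_sum, Finset.mul_sum]
        refine Finset.sum_congr rfl fun s' _ => ?_
        ring
      rw [hPpi]
      rw [neg_le, ← Finset.sum_neg_distrib]
      apply Finset.sum_le_sum
      intro a _
      rw [← mul_neg]
      apply mul_le_mul_of_nonneg_left _ (hpolstar_nn s a)
      rw [neg_le, ← Finset.sum_neg_distrib]
      apply Finset.sum_le_sum
      intro s' _
      rw [← mul_neg]
      apply mul_le_mul_of_nonneg_left _ (hPn s a s')
      rw [neg_le]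
      exact hinner_ge s'
    have h2 := hcond s
    nlinarith
  refine ⟨hle0, fun s => ?_⟩
  have h1 := hmono s
  have h2 := hle0 s
  rw [abs_of_nonpos h2, abs_of_nonpos (h1.trans h2)]
  linarith


end
end
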